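/- Let r > 0 and α ∈ (−2, 2) with sin(πα/2) ≠ 0, and suppose there exist coprime integers a, b (necessarily b ≠ 0) and s > 0 with exp(πiα/2) = (1/s)·(a/r + i·b·r). Let c, d ∈ ℤ with ad − bc = 1 and t = ac/r² + b·d·r², and let M = (a b; c d). Then for every Schwartz function f : ℝ → ℂ and every x ∈ ℝ: s^(−1/2)·exp(πi·t·(x/s)²)·(𝓕^α g)(x/s) = 𝓜(M)f(x), where g(y) = r^(−1/2)·f(y/r). (That is, 𝓥_{1/s}𝓦_t 𝓕^α 𝓥_{1/r} = 𝓜(M), where 𝓥_ρ f(x) = √ρ·f(ρx) for ρ > 0 and 𝓦_t f(x) = exp(πi·t·x²)·f(x).) -/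

import Mathlib

open MeasureTheory

/-- The fractional Fourier transform of a function `f : ℝ → ℂ`, for `α` with
`sin (πα/2) ≠ 0`, with the square root of positive real part given by the
principal complex power. -/
noncomputable def frFT (α : ℝ) (f : ℝ → ℂ) (x : ℝ) : ℂ :=
  (Complex.I * (Real.sin (Real.pi * α / 2) : ℂ)) ^ (-(1/2) : ℂ) *
    ∫ y : ℝ, Complex.exp ((Real.pi : ℂ) * Complex.I / (Real.sin (Real.pi * α / 2) : ℂ) *
      ((Real.cos (Real.pi * α / 2) * (x ^ 2 + y ^ 2) - 2 * x * y : ℝ) : ℂ)) * f y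

/-- The metaplectic operator `𝓜(M)` associated with a real matrix `M = (a b; c d)` with
`ad - bc = 1`, acting on functions `f : ℝ → ℂ`. -/
noncomputable def metaplectic (a b c d : ℝ) (f : ℝ → ℂ) (x : ℝ) : ℂ :=
  if b ≠ 0 then
    (Complex.I * (b : ℂ)) ^ (-(1/2) : ℂ) *
      ∫ y : ℝ, Complex.exp ((Real.pi : ℂ) * Complex.I / (b : ℂ) *
        ((d * x ^ 2 - 2 * x * y + a * y ^ 2 : ℝ) : ℂ)) * f y
  else if 0 < a then
    (a : ℂ) ^ (-(1/2) : ℂ) * Complex.exp ((Real.pi : ℂ) * Complex.I * ((c / a : ℝ) : ℂ)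
      * ((x : ℂ)) ^ 2) * f (x / a)
  else
    -Complex.I * ((-a : ℝ) : ℂ) ^ (-(1/2) : ℂ) *
      Complex.exp ((Real.pi : ℂ) * Complex.I * ((c / a : ℝ) : ℂ) * ((x : ℂ)) ^ 2) * f (x / a)

lemma aux_cpow_mul_ofReal_pos (z : ℂ) (hz : z ≠ 0) {x : ℝ} (hx : 0 < x) (w : ℂ) :
    (z * (x : ℂ)) ^ w = z ^ w * (x : ℂ) ^ w := by
  have hx' : (x : ℂ) ≠ 0 := by exact_mod_cast hx.ne'
  rw [Complex.cpow_def_of_ne_zero (mul_ne_zero hz hx'), Complex.cpow_def_of_ne_zero hz,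
    Complex.cpow_def_of_ne_zero hx', ← Complex.exp_add, ← add_mul,
    Complex.log_mul_ofReal x hx z hz, Complex.ofReal_log hx.le, add_comm]

lemma aux_real_ident (r s t x y : ℝ) (a b c d : ℤ) (hr : r ≠ 0) (hs : s ≠ 0)
    (hb : (b:ℝ) ≠ 0) (hdet : (a:ℝ) * d - b * c = 1)
    (hs2 : (a:ℝ)^2/r^2 + (b:ℝ)^2*r^2 = s^2)
    (ht : t = (a : ℝ) * (c : ℝ) / r ^ 2 + (b : ℝ) * (d : ℝ) * r ^ 2) :
    t*(x/s)^2 + ((a:ℝ)/(r*s)*((x/s)^2+y^2) - 2*(x/s)*y)/((b:ℝ)*r/s)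
      = ((d:ℝ)*x^2 - 2*x*(y/r) + (a:ℝ)*(y/r)^2)/(b:ℝ) := by
  subst ht
  have hs2' : (a:ℝ)^2 + (b:ℝ)^2*r^4 = s^2 * r^2 := by
    field_simp at hs2; linarith
  field_simp
  linear_combination (↑d * x^2) * hs2' - (↑a * x^2) * hdet

/-- `𝓥_{1/s} 𝓦_t 𝓕^α 𝓥_{1/r} = 𝓜(M)` for `M = (a b; c d) ∈ SL(2,ℤ)` with
`e^{πiα/2} = (a/r + i b r)/s` and `t = ac/r² + bdr²`. -/
theorem stmt8 (r α s t : ℝ) (a b c d : ℤ) (hr : 0 < r) (hα : α ∈ Set.Ioo (-2 : ℝ) 2)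
    (hsin : Real.sin (Real.pi * α / 2) ≠ 0) (hab : IsCoprime a b) (hs : 0 < s)
    (hexp : Complex.exp ((Real.pi : ℂ) * Complex.I * (α : ℂ) / 2)
      = (1 / (s : ℂ)) * ((a : ℂ) / (r : ℂ) + Complex.I * (b : ℂ) * (r : ℂ)))
    (hdet : a * d - b * c = 1)
    (ht : t = (a : ℝ) * (c : ℝ) / r ^ 2 + (b : ℝ) * (d : ℝ) * r ^ 2) :
    ∀ f : SchwartzMap ℝ ℂ, ∀ x : ℝ,
      (s : ℂ) ^ (-(1/2) : ℂ) * Complex.exp ((Real.pi : ℂ) * Complex.I * (t : ℂ)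
          * ((x / s : ℝ) : ℂ) ^ 2) *
        frFT α (fun y => (r : ℂ) ^ (-(1/2) : ℂ) * f (y / r)) (x / s)
      = metaplectic (a : ℝ) (b : ℝ) (c : ℝ) (d : ℝ) (⇑f) x := by
  intro f x
  have hrC : (r : ℂ) ≠ 0 := by exact_mod_cast hr.ne'
  have hsC : (s : ℂ) ≠ 0 := by exact_mod_cast hs.ne'
  -- extract cos/sin values
  have h1 : Complex.exp ((Real.pi : ℂ) * Complex.I * (α : ℂ) / 2)
      = Complex.exp (((Real.pi * α / 2 : ℝ) : ℂ) * Complex.I) := by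
    congr 1; push_cast; ring
  rw [h1, Complex.exp_mul_I, ← Complex.ofReal_cos, ← Complex.ofReal_sin] at hexp
  have h2 : ((Real.cos (Real.pi * α / 2) : ℂ)) + (Real.sin (Real.pi * α / 2) : ℂ) * Complex.I
      = ((↑a / (r * s) : ℝ) : ℂ) + ((↑b * r / s : ℝ) : ℂ) * Complex.I := by
    rw [hexp]; push_cast; field_simp
  rw [Complex.ext_iff] at h2
  simp only [Complex.add_re, Complex.add_im, Complex.mul_re, Complex.mul_im,
    Complex.I_re, Complex.I_im, Complex.ofReal_re, Complex.ofReal_im] at h2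
  have hcos : Real.cos (Real.pi * α / 2) = ↑a / (r * s) := by linarith [h2.1]
  have hsin2 : Real.sin (Real.pi * α / 2) = ↑b * r / s := by linarith [h2.2]
  have hb : (b : ℝ) ≠ 0 := by
    intro h; apply hsin; rw [hsin2, h]; simp
  have hsinC : ((Real.sin (Real.pi * α / 2) : ℝ) : ℂ) ≠ 0 := by exact_mod_cast hsin
  have hs2 : (a:ℝ)^2/r^2 + (b:ℝ)^2*r^2 = s^2 := by
    have hpyth := Real.sin_sq_add_cos_sq (Real.pi * α / 2)
    rw [hcos, hsin2] at hpyth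
    field_simp at hpyth
    have h' : (b:ℝ)^2*r^4 + (a:ℝ)^2 = s^2*r^2 := by
      apply mul_left_cancel₀ (pow_ne_zero 2 hs.ne' : s^2 ≠ 0)
      linear_combination s^2 * hpyth
    field_simp
    linarith [h']
  have hdetR : (a:ℝ) * d - b * c = 1 := by exact_mod_cast congrArg (Int.cast : ℤ → ℝ) hdet
  -- the RHS integrand
  set g : ℝ → ℂ := fun y => Complex.exp ((Real.pi : ℂ) * Complex.I / ((b : ℝ) : ℂ) *
      ((((d:ℝ)) * x ^ 2 - 2 * x * y + ((a:ℝ)) * y ^ 2 : ℝ) : ℂ)) * f y with hg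
  have hmeta : metaplectic (a : ℝ) (b : ℝ) (c : ℝ) (d : ℝ) (⇑f) x
      = (Complex.I * ((b : ℝ) : ℂ)) ^ (-(1/2) : ℂ) * ∫ y : ℝ, g y := by
    rw [metaplectic, if_pos hb]
  have hsub : (∫ y : ℝ, g y) = (↑r)⁻¹ * ∫ y : ℝ, g (y / r) := by
    rw [Measure.integral_comp_div g r, abs_of_pos hr, Complex.real_smul, ← mul_assoc,
      inv_mul_cancel₀ hrC, one_mul]
  -- pointwise identity for the integrands
  have key : ∀ y : ℝ,
      Complex.exp ((Real.pi : ℂ) * Complex.I * (t : ℂ) * ((x / s : ℝ) : ℂ) ^ 2) *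
        (Complex.exp ((Real.pi : ℂ) * Complex.I / (Real.sin (Real.pi * α / 2) : ℂ) *
          ((Real.cos (Real.pi * α / 2) * ((x / s) ^ 2 + y ^ 2) - 2 * (x / s) * y : ℝ) : ℂ)) *
          ((r : ℂ) ^ (-(1/2) : ℂ) * f (y / r)))
      = (r : ℂ) ^ (-(1/2) : ℂ) * g (y / r) := by
    intro y
    rw [hg]
    have hexpo : (Real.pi : ℂ) * Complex.I * (t : ℂ) * ((x / s : ℝ) : ℂ) ^ 2 +
        (Real.pi : ℂ) * Complex.I / (Real.sin (Real.pi * α / 2) : ℂ) *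
          ((Real.cos (Real.pi * α / 2) * ((x / s) ^ 2 + y ^ 2) - 2 * (x / s) * y : ℝ) : ℂ)
        = (Real.pi : ℂ) * Complex.I / ((b : ℝ) : ℂ) *
          ((((d:ℝ)) * x ^ 2 - 2 * x * (y / r) + ((a:ℝ)) * (y / r) ^ 2 : ℝ) : ℂ) := by
      have hA : (Real.pi : ℂ) * Complex.I * (t : ℂ) * ((x / s : ℝ) : ℂ) ^ 2 +
          (Real.pi : ℂ) * Complex.I / (Real.sin (Real.pi * α / 2) : ℂ) *
            ((Real.cos (Real.pi * α / 2) * ((x / s) ^ 2 + y ^ 2) - 2 * (x / s) * y : ℝ) : ℂ)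
          = (Real.pi : ℂ) * Complex.I * ((t * (x/s)^2 +
              (Real.cos (Real.pi * α / 2) * ((x/s)^2 + y^2) - 2*(x/s)*y) /
                Real.sin (Real.pi * α / 2) : ℝ) : ℂ) := by
        push_cast
        field_simp
      rw [hA, hcos, hsin2,
        aux_real_ident r s t x y a b c d hr.ne' hs.ne' hb hdetR hs2 ht]
      push_cast
      have hbC : ((b : ℝ) : ℂ) ≠ 0 := by exact_mod_cast hb
      field_simp
    rw [← mul_assoc, ← Complex.exp_add, hexpo]
    ring
  -- the constant identity
  have hconst : (s : ℂ) ^ (-(1/2) : ℂ) *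
      (Complex.I * (Real.sin (Real.pi * α / 2) : ℂ)) ^ (-(1/2) : ℂ) *
      (r : ℂ) ^ (-(1/2) : ℂ)
      = (Complex.I * ((b : ℝ) : ℂ)) ^ (-(1/2) : ℂ) * (↑r)⁻¹ := by
    have hIb : Complex.I * ((b : ℝ) : ℂ) ≠ 0 :=
      mul_ne_zero Complex.I_ne_zero (by exact_mod_cast hb)
    have h5 : (Complex.I * ((Real.sin (Real.pi * α / 2) : ℝ) : ℂ) : ℂ)
        = (Complex.I * ((b : ℝ) : ℂ)) * ((r / s : ℝ) : ℂ) := by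
      rw [hsin2]; push_cast; field_simp
    rw [h5, aux_cpow_mul_ofReal_pos _ hIb (div_pos hr hs)]
    have h6 : ((s : ℂ)) ^ (-(1/2) : ℂ) * ((r / s : ℝ) : ℂ) ^ (-(1/2) : ℂ)
        = (r : ℂ) ^ (-(1/2) : ℂ) := by
      rw [← Complex.mul_cpow_ofReal_nonneg hs.le (div_nonneg hr.le hs.le)]
      have hx : (s : ℂ) * ((r / s : ℝ) : ℂ) = (r : ℂ) := by
        push_cast; field_simp
      rw [hx]
    have h7 : (r : ℂ) ^ (-(1/2) : ℂ) * (r : ℂ) ^ (-(1/2) : ℂ) = (↑r)⁻¹ := by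
      rw [← Complex.cpow_add _ _ hrC]
      norm_num
      rw [Complex.cpow_neg_one]
    calc (s : ℂ) ^ (-(1/2) : ℂ) *
          ((Complex.I * ((b : ℝ) : ℂ)) ^ (-(1/2) : ℂ) * ((r / s : ℝ) : ℂ) ^ (-(1/2) : ℂ)) *
          (r : ℂ) ^ (-(1/2) : ℂ)
        = (Complex.I * ((b : ℝ) : ℂ)) ^ (-(1/2) : ℂ) *
            (((s : ℂ) ^ (-(1/2) : ℂ) * ((r / s : ℝ) : ℂ) ^ (-(1/2) : ℂ)) *
              (r : ℂ) ^ (-(1/2) : ℂ)) := by ring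
      _ = _ := by rw [h6, h7]
  -- assemble
  rw [hmeta, frFT, hsub]
  calc (s : ℂ) ^ (-(1/2) : ℂ) * Complex.exp ((Real.pi : ℂ) * Complex.I * (t : ℂ)
          * ((x / s : ℝ) : ℂ) ^ 2) *
        ((Complex.I * (Real.sin (Real.pi * α / 2) : ℂ)) ^ (-(1/2) : ℂ) *
          ∫ y : ℝ, Complex.exp ((Real.pi : ℂ) * Complex.I / (Real.sin (Real.pi * α / 2) : ℂ) *
            ((Real.cos (Real.pi * α / 2) * ((x / s) ^ 2 + y ^ 2) - 2 * (x / s) * y : ℝ) : ℂ)) *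
            ((r : ℂ) ^ (-(1/2) : ℂ) * f (y / r)))
      = (s : ℂ) ^ (-(1/2) : ℂ) *
          (Complex.I * (Real.sin (Real.pi * α / 2) : ℂ)) ^ (-(1/2) : ℂ) *
        ∫ y : ℝ, Complex.exp ((Real.pi : ℂ) * Complex.I * (t : ℂ) * ((x / s : ℝ) : ℂ) ^ 2) *
          (Complex.exp ((Real.pi : ℂ) * Complex.I / (Real.sin (Real.pi * α / 2) : ℂ) *
            ((Real.cos (Real.pi * α / 2) * ((x / s) ^ 2 + y ^ 2) - 2 * (x / s) * y : ℝ) : ℂ)) *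
            ((r : ℂ) ^ (-(1/2) : ℂ) * f (y / r))) := by
        rw [integral_const_mul]; ring
    _ = (s : ℂ) ^ (-(1/2) : ℂ) *
          (Complex.I * (Real.sin (Real.pi * α / 2) : ℂ)) ^ (-(1/2) : ℂ) *
        ∫ y : ℝ, (r : ℂ) ^ (-(1/2) : ℂ) * g (y / r) := by
        rw [integral_congr_ae (Filter.Eventually.of_forall key)]
    _ = ((s : ℂ) ^ (-(1/2) : ℂ) *
          (Complex.I * (Real.sin (Real.pi * α / 2) : ℂ)) ^ (-(1/2) : ℂ) *
          (r : ℂ) ^ (-(1/2) : ℂ)) * ∫ y : ℝ, g (y / r) := by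
        rw [integral_const_mul]; ring
    _ = ((Complex.I * ((b : ℝ) : ℂ)) ^ (-(1/2) : ℂ) * (↑r)⁻¹) * ∫ y : ℝ, g (y / r) := by
        rw [hconst]
    _ = (Complex.I * ((b : ℝ) : ℂ)) ^ (-(1/2) : ℂ) * ((↑r)⁻¹ * ∫ y : ℝ, g (y / r)) := by
        ring
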